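/- Let s > 0 and let a > b be real numbers. Let P = N(a, s²) and Q = N(b, s²) be Gaussian probability measures on ℝ. Then one-sided threshold tests are optimal in the Neyman–Pearson sense: for every Borel measurable set S ⊆ ℝ and every t ∈ ℝ, if Q(S) ≤ Q((t, ∞)) then P(S) ≤ P((t, ∞)). Equivalently, among all rejection regions of a given size under Q, the region (t,∞) maximizes the probability under P. -/

import Mathlib

open MeasureTheory ProbabilityTheory Real
open scoped NNReal ENNReal

lemma gaussian_pdf_ratio_le (s a b t x : ℝ) (hs : 0 < s) (hab : b < a) (hx : x ≤ t) :
    gaussianPDFReal a (Real.toNNReal (s ^ 2)) x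
      ≤ Real.exp ((a - b) * (2 * t - a - b) / (2 * s ^ 2))
        * gaussianPDFReal b (Real.toNNReal (s ^ 2)) x := by
  have hv : ((Real.toNNReal (s ^ 2) : ℝ≥0) : ℝ) = s ^ 2 :=
    Real.coe_toNNReal _ (sq_nonneg s)
  unfold gaussianPDFReal
  rw [hv]
  have hC : (0:ℝ) ≤ (√(2 * π * (s ^ 2)))⁻¹ := by positivity
  have h : Real.exp (-(x - a)^2 / (2 * s ^ 2))
      ≤ Real.exp ((a - b) * (2 * t - a - b) / (2 * s ^ 2))
        * Real.exp (-(x - b)^2 / (2 * s ^ 2)) := by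
    rw [← Real.exp_add]
    refine Real.exp_le_exp.mpr ?_
    rw [← add_div, div_le_div_iff₀ (by positivity) (by positivity)]
    have h3 : 0 ≤ (a - b) * (t - x) * s ^ 2 := by
      have := sub_pos.mpr hab
      have := sub_nonneg.mpr hx
      positivity
    nlinarith [h3]
  calc (√(2 * π * s ^ 2))⁻¹ * Real.exp (-(x - a)^2 / (2 * s ^ 2))
      ≤ (√(2 * π * s ^ 2))⁻¹ * (Real.exp ((a - b) * (2 * t - a - b) / (2 * s ^ 2))
          * Real.exp (-(x - b)^2 / (2 * s ^ 2))) := by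
        exact mul_le_mul_of_nonneg_left h hC
    _ = Real.exp ((a - b) * (2 * t - a - b) / (2 * s ^ 2))
          * ((√(2 * π * s ^ 2))⁻¹ * Real.exp (-(x - b)^2 / (2 * s ^ 2))) := by ring

lemma gaussian_pdf_ratio_ge (s a b t x : ℝ) (hs : 0 < s) (hab : b < a) (hx : t ≤ x) :
    Real.exp ((a - b) * (2 * t - a - b) / (2 * s ^ 2))
        * gaussianPDFReal b (Real.toNNReal (s ^ 2)) x
      ≤ gaussianPDFReal a (Real.toNNReal (s ^ 2)) x := by
  have hv : ((Real.toNNReal (s ^ 2) : ℝ≥0) : ℝ) = s ^ 2 :=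
    Real.coe_toNNReal _ (sq_nonneg s)
  unfold gaussianPDFReal
  rw [hv]
  have hC : (0:ℝ) ≤ (√(2 * π * (s ^ 2)))⁻¹ := by positivity
  have h : Real.exp ((a - b) * (2 * t - a - b) / (2 * s ^ 2))
        * Real.exp (-(x - b)^2 / (2 * s ^ 2))
      ≤ Real.exp (-(x - a)^2 / (2 * s ^ 2)) := by
    rw [← Real.exp_add]
    refine Real.exp_le_exp.mpr ?_
    rw [← add_div, div_le_div_iff₀ (by positivity) (by positivity)]
    have h3 : 0 ≤ (a - b) * (x - t) * s ^ 2 := by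
      have := sub_pos.mpr hab
      have := sub_nonneg.mpr hx
      positivity
    nlinarith [h3]
  calc Real.exp ((a - b) * (2 * t - a - b) / (2 * s ^ 2))
          * ((√(2 * π * s ^ 2))⁻¹ * Real.exp (-(x - b)^2 / (2 * s ^ 2)))
      = (√(2 * π * s ^ 2))⁻¹ * (Real.exp ((a - b) * (2 * t - a - b) / (2 * s ^ 2))
          * Real.exp (-(x - b)^2 / (2 * s ^ 2))) := by ring
    _ ≤ (√(2 * π * s ^ 2))⁻¹ * Real.exp (-(x - a)^2 / (2 * s ^ 2)) := by
        exact mul_le_mul_of_nonneg_left h hC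

/-- Neyman–Pearson optimality of one-sided threshold tests for Gaussians with common
variance s² and means a > b: for every Borel set S and every threshold t, if
N(b,s²)(S) ≤ N(b,s²)((t,∞)) then N(a,s²)(S) ≤ N(a,s²)((t,∞)). -/
theorem gaussian_threshold_tests_optimal (s a b : ℝ) (hs : 0 < s) (hab : b < a) :
    ∀ S : Set ℝ, MeasurableSet S → ∀ t : ℝ,
      (gaussianReal b (Real.toNNReal (s ^ 2))) S
          ≤ (gaussianReal b (Real.toNNReal (s ^ 2))) (Set.Ioi t) →
      (gaussianReal a (Real.toNNReal (s ^ 2))) S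
          ≤ (gaussianReal a (Real.toNNReal (s ^ 2))) (Set.Ioi t) := by
  intro S hS t hQ
  set v : ℝ≥0 := Real.toNNReal (s ^ 2) with hvdef
  have hv : v ≠ 0 := by
    simp only [hvdef, ne_eq, Real.toNNReal_eq_zero, not_le]
    positivity
  set P := gaussianReal a v with hP
  set Q := gaussianReal b v with hQdef
  set T : Set ℝ := Set.Ioi t with hT
  have hTm : MeasurableSet T := measurableSet_Ioi
  set c : ℝ := Real.exp ((a - b) * (2 * t - a - b) / (2 * s ^ 2)) with hc
  set C : ℝ≥0∞ := ENNReal.ofReal c with hC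
  -- split measures
  have hPS : P (S ∩ T) + P (S \ T) = P S := measure_inter_add_diff S hTm
  have hPT : P (S ∩ T) + P (T \ S) = P T := by
    rw [Set.inter_comm]; exact measure_inter_add_diff T hS
  have hQS : Q (S ∩ T) + Q (S \ T) = Q S := measure_inter_add_diff S hTm
  have hQT : Q (S ∩ T) + Q (T \ S) = Q T := by
    rw [Set.inter_comm]; exact measure_inter_add_diff T hS
  -- from hypothesis
  have h1 : Q (S \ T) ≤ Q (T \ S) := by
    have : Q (S ∩ T) + Q (S \ T) ≤ Q (S ∩ T) + Q (T \ S) := by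
      rw [hQS, hQT]; exact hQ
    exact (ENNReal.add_le_add_iff_left (measure_ne_top Q _)).mp this
  -- key inequalities
  have key1 : P (S \ T) ≤ C * Q (S \ T) := by
    rw [hP, hQdef, gaussianReal_apply a hv, gaussianReal_apply b hv,
      ← lintegral_const_mul C (measurable_gaussianPDF b v)]
    refine setLIntegral_mono ((measurable_gaussianPDF b v).const_mul C) ?_
    intro x hx
    have hxt : x ≤ t := le_of_not_gt fun h => hx.2 h
    rw [gaussianPDF, gaussianPDF, hC, ← ENNReal.ofReal_mul (Real.exp_nonneg _)]
    exact ENNReal.ofReal_le_ofReal (gaussian_pdf_ratio_le s a b t x hs hab hxt)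
  have key2 : C * Q (T \ S) ≤ P (T \ S) := by
    rw [hP, hQdef, gaussianReal_apply a hv, gaussianReal_apply b hv,
      ← lintegral_const_mul C (measurable_gaussianPDF b v)]
    refine setLIntegral_mono (measurable_gaussianPDF a v) ?_
    intro x hx
    have hxt : t ≤ x := le_of_lt hx.1
    rw [gaussianPDF, gaussianPDF, hC, ← ENNReal.ofReal_mul (Real.exp_nonneg _)]
    exact ENNReal.ofReal_le_ofReal (gaussian_pdf_ratio_ge s a b t x hs hab hxt)
  calc P S = P (S ∩ T) + P (S \ T) := hPS.symm
    _ ≤ P (S ∩ T) + C * Q (S \ T) := add_le_add_right key1 _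
    _ ≤ P (S ∩ T) + C * Q (T \ S) := add_le_add_right (mul_le_mul_right h1 C) _
    _ ≤ P (S ∩ T) + P (T \ S) := add_le_add_right key2 _
    _ = P T := hPT
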